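/- Let a, b ∈ ℝ^p, c₁, c₂ > 0, λ ≥ 0, with a ≠ b and 2c₁c₂‖a−b‖ > (c₁+c₂)λ. Then the pair (x, y) with x = a − (λ/(2c₁))·(a−b)/‖a−b‖ and y = b − (λ/(2c₂))·(b−a)/‖b−a‖ minimizes F(x,y) = c₁‖x−a‖² + c₂‖y−b‖² + λ‖x−y‖ over all x, y ∈ ℝ^p. -/

import Mathlib

open scoped RealInnerProductSpace

lemma aux_complete_square {E : Type*} [NormedAddCommGroup E] [InnerProductSpace ℝ E]
    (c lam : ℝ) (hc : 0 < c) (u v : E) (hu : ‖u‖ = 1) :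
    -(lam ^ 2 / (4 * c)) ≤ c * ‖v‖ ^ 2 + lam * ⟪u, v⟫ := by
  set r := lam / (2 * c) with hr
  have hrl : 2 * c * r = lam := by rw [hr]; field_simp
  have h0 : (0 : ℝ) ≤ c * ‖v + r • u‖ ^ 2 := by positivity
  rw [norm_add_sq_real, norm_smul, real_inner_smul_right, hu] at h0
  rw [real_inner_comm v u]
  have heq : lam ^ 2 / (4 * c) = c * r ^ 2 := by
    rw [hr]; field_simp; ring
  have habs : ‖r‖ = |r| := Real.norm_eq_abs r
  rw [habs] at h0
  have hsq : |r| ^ 2 = r ^ 2 := sq_abs r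
  have h5 : lam * ⟪v, u⟫ = 2 * c * r * ⟪v, u⟫ := by rw [← hrl]
  have hsq' : c * (|r| * 1) ^ 2 = c * r ^ 2 := by rw [mul_one, hsq]
  nlinarith [h0, heq, h5, hsq']

set_option maxHeartbeats 1000000 in
theorem two_point_gfl_unfused_case (p : ℕ) (a b : EuclideanSpace ℝ (Fin p))
    (c₁ c₂ lam : ℝ) (hc₁ : 0 < c₁) (hc₂ : 0 < c₂) (hlam : 0 ≤ lam)
    (hab : a ≠ b) (h : (c₁ + c₂) * lam < 2 * c₁ * c₂ * ‖a - b‖) :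
    ∀ x y : EuclideanSpace ℝ (Fin p),
      c₁ * ‖(a - (lam / (2 * c₁)) • (‖a - b‖⁻¹ • (a - b))) - a‖ ^ 2
        + c₂ * ‖(b - (lam / (2 * c₂)) • (‖b - a‖⁻¹ • (b - a))) - b‖ ^ 2
        + lam * ‖(a - (lam / (2 * c₁)) • (‖a - b‖⁻¹ • (a - b)))
                  - (b - (lam / (2 * c₂)) • (‖b - a‖⁻¹ • (b - a)))‖
      ≤ c₁ * ‖x - a‖ ^ 2 + c₂ * ‖y - b‖ ^ 2 + lam * ‖x - y‖ := by
  intro x y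
  set d : ℝ := ‖a - b‖ with hd
  have hd0 : 0 < d := by rw [hd]; exact norm_sub_pos_iff.mpr hab
  set u : EuclideanSpace ℝ (Fin p) := ‖a - b‖⁻¹ • (a - b) with hu_def
  have hu : ‖u‖ = 1 := by
    rw [hu_def, norm_smul, norm_inv, norm_norm, ← hd, inv_mul_cancel₀ hd0.ne']
  have hba : ‖b - a‖⁻¹ • (b - a) = -u := by
    rw [norm_sub_rev, ← neg_sub a b, smul_neg, hu_def]
  have habu : a - b = d • u := by
    rw [hu_def, smul_smul, ← hd, mul_inv_cancel₀ hd0.ne', one_smul]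
  set s : ℝ := lam / (2 * c₁) with hs
  set t : ℝ := lam / (2 * c₂) with ht
  have hs0 : 0 ≤ s := by positivity
  have ht0 : 0 ≤ t := by positivity
  -- value at the candidate minimizer
  have hx1 : (a - s • u) - a = -(s • u) := by abel
  have hy1 : (b - t • (-u)) - b = t • u := by
    rw [smul_neg]; abel
  have hn1 : ‖(a - s • u) - a‖ = s := by
    rw [hx1, norm_neg, norm_smul, hu, mul_one, Real.norm_eq_abs, abs_of_nonneg hs0]
  have hn2 : ‖(b - t • (-u)) - b‖ = t := by
    rw [hy1, norm_smul, hu, mul_one, Real.norm_eq_abs, abs_of_nonneg ht0]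
  have hstd : s + t ≤ d := by
    rw [hs, ht, div_add_div _ _ (by positivity) (by positivity), div_le_iff₀ (by positivity)]
    nlinarith [h]
  have hxy : (a - s • u) - (b - t • (-u)) = (d - (s + t)) • u := by
    have : (a - s • u) - (b - t • (-u)) = (a - b) - (s + t) • u := by
      rw [smul_neg, add_smul]; abel
    rw [this, habu, ← sub_smul]
  have hn3 : ‖(a - s • u) - (b - t • (-u))‖ = d - (s + t) := by
    rw [hxy, norm_smul, hu, mul_one, Real.norm_eq_abs, abs_of_nonneg (by linarith)]
  -- lower bound for arbitrary x y
  have h1 := aux_complete_square c₁ lam hc₁ u (x - a) hu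
  have h2 := aux_complete_square c₂ (-lam) hc₂ u (y - b) hu
  rw [neg_sq] at h2
  have h3 : ⟪u, x - y⟫ ≤ ‖x - y‖ := by
    calc ⟪u, x - y⟫ ≤ ‖u‖ * ‖x - y‖ := real_inner_le_norm u (x - y)
    _ = ‖x - y‖ := by rw [hu, one_mul]
  have h4 : ⟪u, x - y⟫ = ⟪u, x - a⟫ - ⟪u, y - b⟫ + d := by
    have hxyd : x - y = (x - a) - (y - b) + (a - b) := by abel
    rw [hxyd, inner_add_right, inner_sub_right, habu, real_inner_smul_right,
      real_inner_self_eq_norm_sq, hu]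
    ring
  have h3' : lam * ⟪u, x - y⟫ ≤ lam * ‖x - y‖ := mul_le_mul_of_nonneg_left h3 hlam
  -- algebraic identities
  have e1 : c₁ * s ^ 2 = lam ^ 2 / (4 * c₁) := by rw [hs]; field_simp; ring
  have e2 : c₂ * t ^ 2 = lam ^ 2 / (4 * c₂) := by rw [ht]; field_simp; ring
  have e3 : lam * s = lam ^ 2 / (2 * c₁) := by rw [hs]; field_simp
  have e4 : lam * t = lam ^ 2 / (2 * c₂) := by rw [ht]; field_simp
  have e5 : lam ^ 2 / (2 * c₁) = 2 * (lam ^ 2 / (4 * c₁)) := by ring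
  have e6 : lam ^ 2 / (2 * c₂) = 2 * (lam ^ 2 / (4 * c₂)) := by ring
  rw [hba, hn1, hn2, hn3]
  rw [h4] at h3'
  nlinarith [h1, h2, h3', e1, e2, e3, e4, e5, e6]
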